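/- Let A ∈ ℝ^{d×d} and u_0 ∈ ℝ^d. For h > 0 write (w_h(t), w̄_h(t)) for the deterministic Euler dynamics with stepsize parameter h and initial value u_0, and let u(t) = exp(tA)u_0 be the solution of u' = Au, u(0) = u_0. Then for every t ≥ 0 there exists a constant C*_t > 0 such that for all h ∈ (0, 1]: ‖w̄_h(t) − u(t)‖ ≤ C*_t · h. -/

import Mathlib

open Matrix

/-- The block matrix `B = [[0, A], [h⁻¹ I, −h⁻¹ I]]` of the deterministic Euler dynamics. -/
noncomputable def eulerBlock {d : ℕ} (A : Matrix (Fin d) (Fin d) ℝ) (h : ℝ) :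
    Matrix (Fin d ⊕ Fin d) (Fin d ⊕ Fin d) ℝ :=
  Matrix.fromBlocks 0 A (h⁻¹ • 1) (-(h⁻¹ • (1 : Matrix (Fin d) (Fin d) ℝ)))

/-- The Euclidean norm of a vector in `ℝ^n`. -/
noncomputable def eucNorm {n : Type*} [Fintype n] (x : n → ℝ) : ℝ :=
  ‖(WithLp.equiv 2 (n → ℝ)).symm x‖

/-- The operator norm (w.r.t. Euclidean norms) of a real square matrix. -/
noncomputable def matOpNorm {n : Type*} [Fintype n] [DecidableEq n] (M : Matrix n n ℝ) : ℝ :=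
  ‖Matrix.toEuclideanCLM (𝕜 := ℝ) M‖

/-- The full pair `(w(t), w̄(t)) = exp(tB)(u₀, u₀)ᵀ` of the deterministic Euler dynamics. -/
noncomputable def detEulerPair {d : ℕ} (A : Matrix (Fin d) (Fin d) ℝ) (h : ℝ)
    (u0 : Fin d → ℝ) (t : ℝ) : (Fin d ⊕ Fin d) → ℝ :=
  (NormedSpace.exp (t • eulerBlock A h)).mulVec (Sum.elim u0 u0)

/-- The first component `w(t)` of the deterministic Euler dynamics. -/
noncomputable def detEulerW {d : ℕ} (A : Matrix (Fin d) (Fin d) ℝ) (h : ℝ)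
    (u0 : Fin d → ℝ) (t : ℝ) : Fin d → ℝ :=
  fun i => detEulerPair A h u0 t (Sum.inl i)

/-- The companion process `w̄(t)` of the deterministic Euler dynamics. -/
noncomputable def detEulerWbar {d : ℕ} (A : Matrix (Fin d) (Fin d) ℝ) (h : ℝ)
    (u0 : Fin d → ℝ) (t : ℝ) : Fin d → ℝ :=
  fun i => detEulerPair A h u0 t (Sum.inr i)

section Aux

open scoped Matrix.Norms.L2Operator
open MeasureTheory intervalIntegral Set

variable {d : ℕ}

/-- Projection onto the first block of `EuclideanSpace ℝ (Fin d ⊕ Fin d)`. -/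
noncomputable def prl (d : ℕ) :
    EuclideanSpace ℝ (Fin d ⊕ Fin d) →L[ℝ] EuclideanSpace ℝ (Fin d) :=
  LinearMap.toContinuousLinearMap <|
    ((WithLp.linearEquiv 2 ℝ (Fin d → ℝ)).symm.toLinearMap.comp
      ((LinearMap.funLeft ℝ ℝ Sum.inl).comp
        (WithLp.linearEquiv 2 ℝ ((Fin d ⊕ Fin d) → ℝ)).toLinearMap))

/-- Projection onto the second block of `EuclideanSpace ℝ (Fin d ⊕ Fin d)`. -/
noncomputable def prr (d : ℕ) :
    EuclideanSpace ℝ (Fin d ⊕ Fin d) →L[ℝ] EuclideanSpace ℝ (Fin d) :=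
  LinearMap.toContinuousLinearMap <|
    ((WithLp.linearEquiv 2 ℝ (Fin d → ℝ)).symm.toLinearMap.comp
      ((LinearMap.funLeft ℝ ℝ Sum.inr).comp
        (WithLp.linearEquiv 2 ℝ ((Fin d ⊕ Fin d) → ℝ)).toLinearMap))

lemma prl_apply (x : EuclideanSpace ℝ (Fin d ⊕ Fin d)) :
    prl d x = (WithLp.equiv 2 (Fin d → ℝ)).symm
      (fun i => (WithLp.equiv 2 ((Fin d ⊕ Fin d) → ℝ) x) (Sum.inl i)) := rfl

lemma prr_apply (x : EuclideanSpace ℝ (Fin d ⊕ Fin d)) :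
    prr d x = (WithLp.equiv 2 (Fin d → ℝ)).symm
      (fun i => (WithLp.equiv 2 ((Fin d ⊕ Fin d) → ℝ) x) (Sum.inr i)) := rfl

lemma toEuclideanCLM_continuous {n : Type*} [Fintype n] [DecidableEq n] :
    Continuous (Matrix.toEuclideanCLM (𝕜 := ℝ) (n := n)) :=
  (AddMonoidHomClass.isometry_of_norm _ (fun _ => rfl)).continuous

/-- Transport of the matrix exponential to CLM exponential. -/
lemma toEuclideanCLM_exp {n : Type*} [Fintype n] [DecidableEq n] (M : Matrix n n ℝ) :
    Matrix.toEuclideanCLM (𝕜 := ℝ) (NormedSpace.exp M) =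
      NormedSpace.exp (Matrix.toEuclideanCLM (𝕜 := ℝ) M) :=
  by
    letI := NormedAlgebra.restrictScalars ℚ ℝ (Matrix n n ℝ)
    letI := NormedAlgebra.restrictScalars ℚ ℝ (EuclideanSpace ℝ n →L[ℝ] EuclideanSpace ℝ n)
    exact NormedSpace.map_exp (Matrix.toEuclideanCLM (𝕜 := ℝ) (n := n))
      toEuclideanCLM_continuous M

/-- The structural identity for the first block of the Euler block matrix. -/
lemma prl_eulerBlock (A : Matrix (Fin d) (Fin d) ℝ) (h : ℝ)
    (x : EuclideanSpace ℝ (Fin d ⊕ Fin d)) :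
    prl d (Matrix.toEuclideanCLM (𝕜 := ℝ) (eulerBlock A h) x) =
      Matrix.toEuclideanCLM (𝕜 := ℝ) A (prr d x) := by
  ext i
  show (eulerBlock A h *ᵥ (WithLp.equiv 2 _ x)) (Sum.inl i) = (A *ᵥ fun j => x (Sum.inr j)) i
  simp [eulerBlock, Matrix.fromBlocks_mulVec, Matrix.mulVec, dotProduct]

/-- The structural identity for the second block of the Euler block matrix. -/
lemma prr_eulerBlock (A : Matrix (Fin d) (Fin d) ℝ) (h : ℝ)
    (x : EuclideanSpace ℝ (Fin d ⊕ Fin d)) :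
    prr d (Matrix.toEuclideanCLM (𝕜 := ℝ) (eulerBlock A h) x) =
      h⁻¹ • (prl d x - prr d x) := by
  ext i
  show (eulerBlock A h *ᵥ (WithLp.equiv 2 _ x)) (Sum.inr i) = _
  have : (h⁻¹ • (prl d x - prr d x)) i = h⁻¹ * (x (Sum.inl i) - x (Sum.inr i)) := rfl
  rw [this]
  simp [eulerBlock, Matrix.fromBlocks_mulVec, Matrix.smul_mulVec, Matrix.one_mulVec,
    Matrix.neg_mulVec, mul_sub]
  rfl

end Aux
section Dyn

open scoped Matrix.Norms.L2Operator
open MeasureTheory intervalIntegral Set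

set_option synthInstance.maxHeartbeats 1000000
set_option maxHeartbeats 1000000

variable {d : ℕ}

/-- The pair dynamics as a curve in Euclidean space. -/
noncomputable def vFun (A : Matrix (Fin d) (Fin d) ℝ) (h : ℝ) (u0 : Fin d → ℝ) (t : ℝ) :
    EuclideanSpace ℝ (Fin d ⊕ Fin d) :=
  NormedSpace.exp (t • Matrix.toEuclideanCLM (𝕜 := ℝ) (eulerBlock A h))
    ((WithLp.equiv 2 _).symm (Sum.elim u0 u0))

/-- The limit dynamics as a curve in Euclidean space. -/
noncomputable def uFun (A : Matrix (Fin d) (Fin d) ℝ) (u0 : Fin d → ℝ) (t : ℝ) :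
    EuclideanSpace ℝ (Fin d) :=
  NormedSpace.exp (t • Matrix.toEuclideanCLM (𝕜 := ℝ) A) ((WithLp.equiv 2 _).symm u0)

lemma hasDerivAt_clm_exp {n : Type*} [Fintype n] [DecidableEq n]
    (L : EuclideanSpace ℝ n →L[ℝ] EuclideanSpace ℝ n) (x : EuclideanSpace ℝ n) (t : ℝ) :
    HasDerivAt (fun s => NormedSpace.exp (s • L) x)
      (L (NormedSpace.exp (t • L) x)) t := by
  have h1 := (_root_.hasDerivAt_exp_smul_const' (𝕂 := ℝ) L t).clm_apply
    (hasDerivAt_const t x)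
  simpa using h1

lemma hasDerivAt_vFun (A : Matrix (Fin d) (Fin d) ℝ) (h : ℝ) (u0 : Fin d → ℝ) (t : ℝ) :
    HasDerivAt (vFun A h u0)
      (Matrix.toEuclideanCLM (𝕜 := ℝ) (eulerBlock A h) (vFun A h u0 t)) t :=
  hasDerivAt_clm_exp _ _ t

lemma hasDerivAt_uFun (A : Matrix (Fin d) (Fin d) ℝ) (u0 : Fin d → ℝ) (t : ℝ) :
    HasDerivAt (uFun A u0) (Matrix.toEuclideanCLM (𝕜 := ℝ) A (uFun A u0 t)) t :=
  hasDerivAt_clm_exp _ _ t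

lemma hasDerivAt_w (A : Matrix (Fin d) (Fin d) ℝ) (h : ℝ) (u0 : Fin d → ℝ) (t : ℝ) :
    HasDerivAt (fun s => prl d (vFun A h u0 s))
      (Matrix.toEuclideanCLM (𝕜 := ℝ) A (prr d (vFun A h u0 t))) t := by
  have := (prl d).hasFDerivAt.comp_hasDerivAt t (hasDerivAt_vFun A h u0 t)
  rwa [prl_eulerBlock] at this

lemma hasDerivAt_wb (A : Matrix (Fin d) (Fin d) ℝ) (h : ℝ) (u0 : Fin d → ℝ) (t : ℝ) :
    HasDerivAt (fun s => prr d (vFun A h u0 s))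
      (h⁻¹ • (prl d (vFun A h u0 t) - prr d (vFun A h u0 t))) t := by
  have := (prr d).hasFDerivAt.comp_hasDerivAt t (hasDerivAt_vFun A h u0 t)
  rwa [prr_eulerBlock] at this

lemma vFun_zero (A : Matrix (Fin d) (Fin d) ℝ) (h : ℝ) (u0 : Fin d → ℝ) :
    vFun A h u0 0 = (WithLp.equiv 2 _).symm (Sum.elim u0 u0) := by
  have h0 : ((0:ℝ) • Matrix.toEuclideanCLM (𝕜 := ℝ) (eulerBlock A h)) = 0 := by ext v; simp
  show (NormedSpace.exp ((0:ℝ) • Matrix.toEuclideanCLM (𝕜 := ℝ) (eulerBlock A h))) _ = _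
  rw [h0, NormedSpace.exp_zero, ContinuousLinearMap.one_apply]

lemma uFun_zero (A : Matrix (Fin d) (Fin d) ℝ) (u0 : Fin d → ℝ) :
    uFun A u0 0 = (WithLp.equiv 2 _).symm u0 := by
  have h0 : ((0:ℝ) • Matrix.toEuclideanCLM (𝕜 := ℝ) A) = 0 := by ext v; simp
  show (NormedSpace.exp ((0:ℝ) • Matrix.toEuclideanCLM (𝕜 := ℝ) A)) _ = _
  rw [h0, NormedSpace.exp_zero, ContinuousLinearMap.one_apply]

/-- Link with the `detEulerPair` definition. -/
lemma vFun_eq (A : Matrix (Fin d) (Fin d) ℝ) (h : ℝ) (u0 : Fin d → ℝ) (t : ℝ) :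
    vFun A h u0 t = (WithLp.equiv 2 _).symm (detEulerPair A h u0 t) := by
  unfold vFun detEulerPair
  rw [show t • Matrix.toEuclideanCLM (𝕜 := ℝ) (eulerBlock A h)
      = Matrix.toEuclideanCLM (𝕜 := ℝ) (t • eulerBlock A h) by rw [_root_.map_smul],
    ← toEuclideanCLM_exp]
  rfl

lemma uFun_eq (A : Matrix (Fin d) (Fin d) ℝ) (u0 : Fin d → ℝ) (t : ℝ) :
    uFun A u0 t = (WithLp.equiv 2 _).symm ((NormedSpace.exp (t • A)).mulVec u0) := by
  unfold uFun
  rw [show t • Matrix.toEuclideanCLM (𝕜 := ℝ) A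
      = Matrix.toEuclideanCLM (𝕜 := ℝ) (t • A) by rw [_root_.map_smul],
    ← toEuclideanCLM_exp]
  rfl

lemma wb_eq (A : Matrix (Fin d) (Fin d) ℝ) (h : ℝ) (u0 : Fin d → ℝ) (t : ℝ) :
    prr d (vFun A h u0 t) = (WithLp.equiv 2 _).symm (detEulerWbar A h u0 t) := by
  rw [vFun_eq, prr_apply]
  rfl

/-- The norm appearing in the statement equals the Euclidean-space norm of the difference. -/
lemma eucNorm_eq (A : Matrix (Fin d) (Fin d) ℝ) (h : ℝ) (u0 : Fin d → ℝ) (t : ℝ) :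
    eucNorm (detEulerWbar A h u0 t - (NormedSpace.exp (t • A)).mulVec u0)
      = ‖prr d (vFun A h u0 t) - uFun A u0 t‖ := by
  rw [wb_eq, uFun_eq, eucNorm]
  congr 1

end Dyn
section Gron

open MeasureTheory intervalIntegral Set

lemma exp_sub_one_le_mul_exp {x : ℝ} : Real.exp x - 1 ≤ x * Real.exp x := by
  have h1 : (-x) + 1 ≤ Real.exp (-x) := Real.add_one_le_exp _
  have h2 : Real.exp (-x) * Real.exp x = 1 := by rw [← Real.exp_add]; simp
  nlinarith [Real.exp_pos x]

lemma int_gronwall {φ : ℝ → ℝ} {T c K : ℝ} (hφ : Continuous φ)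
    (h0 : ∀ s, 0 ≤ φ s) (hK : 0 ≤ K) (hc : 0 ≤ c)
    (hineq : ∀ t ∈ Set.Icc (0:ℝ) T, φ t ≤ c + K * ∫ s in (0:ℝ)..t, φ s) :
    ∀ t ∈ Set.Icc (0:ℝ) T, φ t ≤ c * Real.exp (K * t) := by
  intro t ht
  set Φ : ℝ → ℝ := fun r => ∫ s in (0:ℝ)..r, φ s with hΦ
  have hd : ∀ x : ℝ, HasDerivAt Φ (φ x) x := fun x =>
    (hφ.integral_hasStrictDerivAt 0 x).hasDerivAt
  have hΦ0 : ∀ x ∈ Set.Icc (0:ℝ) T, 0 ≤ Φ x := by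
    intro x hx
    exact intervalIntegral.integral_nonneg hx.1 (fun u _ => h0 u)
  have key := norm_le_gronwallBound_of_norm_deriv_right_le (f := Φ) (f' := φ)
    (δ := 0) (K := K) (ε := c) (a := 0) (b := T)
    (fun x _ => (hd x).continuousAt.continuousWithinAt)
    (fun x _ => (hd x).hasDerivWithinAt)
    (by simp [hΦ])
    (fun x hx => by
      rw [Real.norm_eq_abs, Real.norm_eq_abs, abs_of_nonneg (h0 x),
        abs_of_nonneg (hΦ0 x (Set.mem_Icc_of_Ico hx))]
      have := hineq x (Set.mem_Icc_of_Ico hx)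
      linarith)
  have hΦt : Φ t ≤ gronwallBound 0 K c (t - 0) := by
    have := key t ht
    rwa [Real.norm_eq_abs, abs_of_nonneg (hΦ0 t ht)] at this
  have hfin : c + K * gronwallBound 0 K c t ≤ c * Real.exp (K * t) := by
    rcases eq_or_ne K 0 with hK0 | hK0
    · subst hK0; simp [gronwallBound_K0]
    · rw [gronwallBound_of_K_ne_0 hK0]
      have : K * (0 * Real.exp (K * t) + c / K * (Real.exp (K * t) - 1))
          = c * (Real.exp (K * t) - 1) := by field_simp; ring
      rw [this]; ring_nf; rfl
  calc φ t ≤ c + K * Φ t := hineq t ht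
    _ ≤ c + K * gronwallBound 0 K c t := by
        have := mul_le_mul_of_nonneg_left (by simpa using hΦt) hK; linarith
    _ ≤ c * Real.exp (K * t) := hfin

end Gron
set_option maxHeartbeats 2000000 in
set_option synthInstance.maxHeartbeats 1000000 in
/-- For every `t ≥ 0` there is `C*_t > 0` with `‖w̄_h(t) − exp(tA)u₀‖ ≤ C*_t·h` for `h ∈ (0,1]`. -/
theorem stmt5 {d : ℕ} (A : Matrix (Fin d) (Fin d) ℝ) (u0 : Fin d → ℝ) :
    ∀ t : ℝ, 0 ≤ t → ∃ C > (0 : ℝ), ∀ h : ℝ, 0 < h → h ≤ 1 →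
      eucNorm (detEulerWbar A h u0 t - (NormedSpace.exp (t • A)).mulVec u0) ≤ C * h := by
  intro T hT
  set a : ℝ := matOpNorm A with ha_def
  have ha0 : 0 ≤ a := norm_nonneg _
  set n0 : ℝ := ‖(WithLp.equiv 2 (Fin d → ℝ)).symm u0‖ with hn0_def
  have hn00 : 0 ≤ n0 := norm_nonneg _
  set R : ℝ := n0 * (1 + a) * Real.exp (a * T) with hR_def
  have hR0 : 0 ≤ R := by positivity
  set W : ℝ := n0 + R with hW_def
  have hW0 : 0 ≤ W := by positivity
  set C : ℝ := a * W + a * W * (a * T) * Real.exp (a * T) + 1 with hC_def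
  have hCpos : 0 < C := by
    have h1 : 0 ≤ a * W := mul_nonneg ha0 hW0
    have h2 : 0 ≤ a * W * (a * T) * Real.exp (a * T) :=
      mul_nonneg (mul_nonneg h1 (mul_nonneg ha0 hT)) (Real.exp_pos _).le
    rw [hC_def]; linarith
  refine ⟨C, hCpos, ?_⟩
  intro h hh hh1
  have hhne : h ≠ 0 := ne_of_gt hh
  have hhi0 : (0:ℝ) ≤ h⁻¹ := (inv_pos.2 hh).le
  -- the dynamics
  set Am : EuclideanSpace ℝ (Fin d) →L[ℝ] EuclideanSpace ℝ (Fin d) :=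
    Matrix.toEuclideanCLM (𝕜 := ℝ) A with hAm_def
  set w : ℝ → EuclideanSpace ℝ (Fin d) := fun s => prl d (vFun A h u0 s) with hw_def
  set wb : ℝ → EuclideanSpace ℝ (Fin d) := fun s => prr d (vFun A h u0 s) with hwb_def
  set u : ℝ → EuclideanSpace ℝ (Fin d) := uFun A u0 with hu_def
  have hw' : ∀ s, HasDerivAt w (Am (wb s)) s := fun s => hasDerivAt_w A h u0 s
  have hwb' : ∀ s, HasDerivAt wb (h⁻¹ • (w s - wb s)) s := fun s => hasDerivAt_wb A h u0 s
  have hu' : ∀ s, HasDerivAt u (Am (u s)) s := fun s => hasDerivAt_uFun A u0 s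
  have hwc : Continuous w := continuous_iff_continuousAt.2 fun s => (hw' s).continuousAt
  have hwbc : Continuous wb := continuous_iff_continuousAt.2 fun s => (hwb' s).continuousAt
  have huc : Continuous u := continuous_iff_continuousAt.2 fun s => (hu' s).continuousAt
  have hw0 : w 0 = (WithLp.equiv 2 (Fin d → ℝ)).symm u0 := by
    show prl d (vFun A h u0 0) = _
    rw [vFun_zero]; rfl
  have hwb0 : wb 0 = (WithLp.equiv 2 (Fin d → ℝ)).symm u0 := by
    show prr d (vFun A h u0 0) = _
    rw [vFun_zero]; rfl
  have hu0 : u 0 = (WithLp.equiv 2 (Fin d → ℝ)).symm u0 := uFun_zero A u0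
  have hAle : ∀ x, ‖Am x‖ ≤ a * ‖x‖ := fun x => Am.le_opNorm x
  -- exponential weights
  set Ep : ℝ → ℝ := fun s => Real.exp (h⁻¹ * s) with hEp_def
  set Em : ℝ → ℝ := fun s => Real.exp (-h⁻¹ * s) with hEm_def
  have hEpPos : ∀ s, 0 < Ep s := fun s => Real.exp_pos _
  have hEmPos : ∀ s, 0 < Em s := fun s => Real.exp_pos _
  have hEmEp : ∀ s, Em s * Ep s = 1 := by
    intro s
    rw [hEm_def, hEp_def]
    show Real.exp _ * Real.exp _ = 1
    rw [← Real.exp_add]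
    norm_num
  have hEp0 : Ep 0 = 1 := by rw [hEp_def]; simp
  have hEm0 : Em 0 = 1 := by rw [hEm_def]; simp
  have hEmle1 : ∀ s, 0 ≤ s → Em s ≤ 1 := by
    intro s hs
    rw [hEm_def]
    refine Real.exp_le_one_iff.2 ?_
    have : 0 ≤ h⁻¹ * s := mul_nonneg hhi0 hs
    linarith
  have hEpc : Continuous Ep := Real.continuous_exp.comp (continuous_const.mul continuous_id)
  have hEmc : Continuous Em := Real.continuous_exp.comp (continuous_const.mul continuous_id)
  have hEp' : ∀ s, HasDerivAt Ep (h⁻¹ * Ep s) s := by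
    intro s
    have h1 := ((hasDerivAt_id s).const_mul h⁻¹).exp
    convert h1 using 1
    simp only [id_eq]; ring
    simp only [hEp_def, id_eq]; ring
  have hEm' : ∀ s, HasDerivAt Em (-h⁻¹ * Em s) s := by
    intro s
    have h1 := ((hasDerivAt_id s).const_mul (-h⁻¹)).exp
    convert h1 using 1
    simp only [id_eq]; ring
    simp only [hEm_def, id_eq]; ring
  -- integral identities
  have hI1 : ∀ x : ℝ, ∫ s in (0:ℝ)..x, Am (wb s) = w x - w 0 := fun x =>
    intervalIntegral.integral_eq_sub_of_hasDerivAt (fun s _ => hw' s)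
      ((Am.continuous.comp hwbc).intervalIntegrable _ _)
  have hI2d : ∀ s : ℝ, HasDerivAt (fun r => Ep r • wb r) ((h⁻¹ * Ep s) • w s) s := by
    intro s
    have h1 := (hEp' s).smul (hwb' s)
    refine h1.congr_deriv (Eq.symm ?_)
    module
  have hI2 : ∀ x : ℝ, ∫ s in (0:ℝ)..x, (h⁻¹ * Ep s) • w s = Ep x • wb x - wb 0 := by
    intro x
    have h2 := intervalIntegral.integral_eq_sub_of_hasDerivAt (f := fun r => Ep r • wb r)
      (f' := fun s => (h⁻¹ * Ep s) • w s) (a := 0) (b := x) (fun s _ => hI2d s)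
      (((continuous_const.mul hEpc).smul hwc).intervalIntegrable _ _)
    rw [h2]
    simp only [hEp0, one_smul]
  have hI3d : ∀ s : ℝ, HasDerivAt (fun r => Ep r • (w r - wb r)) (Ep s • Am (wb s)) s := by
    intro s
    have h1 := (hEp' s).smul ((hw' s).sub (hwb' s))
    refine h1.congr_deriv (Eq.symm ?_)
    rw [Pi.sub_apply]
    module
  have hI3 : ∀ x : ℝ, ∫ s in (0:ℝ)..x, Ep s • Am (wb s) = Ep x • (w x - wb x) := by
    intro x
    have h2 := intervalIntegral.integral_eq_sub_of_hasDerivAt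
      (f := fun r => Ep r • (w r - wb r)) (f' := fun s => Ep s • Am (wb s)) (a := 0) (b := x)
      (fun s _ => hI3d s) ((hEpc.smul (Am.continuous.comp hwbc)).intervalIntegrable _ _)
    rw [h2]
    simp only [hEp0, one_smul, hw0, hwb0, sub_self, smul_zero, sub_zero]
  have hS1 : ∀ x : ℝ, ∫ s in (0:ℝ)..x, Ep s = h * Ep x - h := by
    intro x
    have hd : ∀ s : ℝ, HasDerivAt (fun r => h * Ep r) (Ep s) s := by
      intro s
      have h1 := (hEp' s).const_mul h
      refine h1.congr_deriv (Eq.symm ?_)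
      field_simp
    have h2 := intervalIntegral.integral_eq_sub_of_hasDerivAt (f := fun r => h * Ep r)
      (f' := Ep) (a := 0) (b := x) (fun s _ => hd s) (hEpc.intervalIntegrable _ _)
    rw [h2]
    simp only [hEp0, mul_one]
  -- the auxiliary primitive F
  set F : ℝ → ℝ := fun x => ∫ s in (0:ℝ)..x, Ep s * ‖w s‖ with hF_def
  have hFic : Continuous (fun s => Ep s * ‖w s‖) := hEpc.mul hwc.norm
  have hFd : ∀ x, HasDerivAt F (Ep x * ‖w x‖) x := fun x =>
    (hFic.integral_hasStrictDerivAt 0 x).hasDerivAt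
  have hFnn : ∀ x, 0 ≤ x → 0 ≤ F x := fun x hx =>
    intervalIntegral.integral_nonneg hx (fun s _ => mul_nonneg (hEpPos s).le (norm_nonneg _))
  have hFcont : Continuous F := continuous_iff_continuousAt.2 fun x => (hFd x).continuousAt
  have hFzero : F 0 = 0 := intervalIntegral.integral_same
  have hS3 : ∀ x : ℝ, ∫ s in (0:ℝ)..x, (‖w s‖ - h⁻¹ * (Em s * F s)) = Em x * F x := by
    intro x
    have hd : ∀ s : ℝ, HasDerivAt (fun r => Em r * F r) (‖w s‖ - h⁻¹ * (Em s * F s)) s := by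
      intro s
      have h1 := (hEm' s).mul (hFd s)
      refine h1.congr_deriv (Eq.symm ?_)
      have h2 := hEmEp s
      linear_combination (-‖w s‖) * h2
    have hint : Continuous fun s => ‖w s‖ - h⁻¹ * (Em s * F s) :=
      hwc.norm.sub (continuous_const.mul (hEmc.mul hFcont))
    have h2 := intervalIntegral.integral_eq_sub_of_hasDerivAt (f := fun r => Em r * F r)
      (a := 0) (b := x) (fun s _ => hd s) (hint.intervalIntegrable _ _)
    rw [h2]
    simp only [hFzero, mul_zero, sub_zero]
  -- basic estimate for ‖wb‖
  have key_wb : ∀ x : ℝ, 0 ≤ x → Ep x * ‖wb x‖ ≤ n0 + h⁻¹ * F x := by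
    intro x hx
    have h1 : Ep x • wb x = wb 0 + ∫ s in (0:ℝ)..x, (h⁻¹ * Ep s) • w s := by
      rw [hI2 x]; abel
    have hnormint : (fun s => ‖(h⁻¹ * Ep s) • w s‖) = fun s => h⁻¹ * (Ep s * ‖w s‖) := by
      funext s
      rw [norm_smul, Real.norm_eq_abs, abs_of_nonneg (mul_nonneg hhi0 (hEpPos s).le)]
      ring
    have h2 : ‖Ep x • wb x‖ ≤ n0 + h⁻¹ * F x := by
      rw [h1]
      refine (norm_add_le _ _).trans ?_
      have h3 : ‖wb 0‖ = n0 := by rw [hwb0]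
      have h4 : ‖∫ s in (0:ℝ)..x, (h⁻¹ * Ep s) • w s‖ ≤ h⁻¹ * F x := by
        refine (intervalIntegral.norm_integral_le_integral_norm hx).trans ?_
        rw [hnormint, intervalIntegral.integral_const_mul]
      linarith
    rwa [norm_smul, Real.norm_eq_abs, abs_of_nonneg (hEpPos x).le] at h2
  have key_wb' : ∀ x : ℝ, 0 ≤ x → ‖wb x‖ ≤ Em x * (n0 + h⁻¹ * F x) := by
    intro x hx
    have h1 := key_wb x hx
    have h4 := hEmEp x
    calc ‖wb x‖ = Em x * Ep x * ‖wb x‖ := by rw [h4, one_mul]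
      _ = Em x * (Ep x * ‖wb x‖) := by ring
      _ ≤ Em x * (n0 + h⁻¹ * F x) := mul_le_mul_of_nonneg_left h1 (hEmPos x).le
  -- integral bound for ‖wb‖
  have hS2 : ∀ x : ℝ, ∫ s in (0:ℝ)..x, Em s = h - h * Em x := by
    intro x
    have hd : ∀ s : ℝ, HasDerivAt (fun r => -h * Em r) (Em s) s := by
      intro s
      have h1 := (hEm' s).const_mul (-h)
      refine h1.congr_deriv (Eq.symm ?_)
      field_simp
    have h2 := intervalIntegral.integral_eq_sub_of_hasDerivAt (f := fun r => -h * Em r)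
      (f' := Em) (a := 0) (b := x) (fun s _ => hd s) (hEmc.intervalIntegrable _ _)
    rw [h2]
    simp only [hEm0, mul_one]
    ring
  have key_intwb : ∀ x : ℝ, 0 ≤ x →
      ∫ s in (0:ℝ)..x, ‖wb s‖ ≤ n0 * h + ∫ s in (0:ℝ)..x, ‖w s‖ := by
    intro x hx
    have hmono : ∫ s in (0:ℝ)..x, ‖wb s‖
        ≤ ∫ s in (0:ℝ)..x, (Em s * n0 + h⁻¹ * (Em s * F s)) := by
      refine intervalIntegral.integral_mono_on hx (hwbc.norm.intervalIntegrable _ _)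
        (((hEmc.mul continuous_const).add
          (continuous_const.mul (hEmc.mul hFcont))).intervalIntegrable _ _) ?_
      intro s hs
      calc ‖wb s‖ ≤ Em s * (n0 + h⁻¹ * F s) := key_wb' s hs.1
        _ = Em s * n0 + h⁻¹ * (Em s * F s) := by ring
    have hsplit : ∫ s in (0:ℝ)..x, (Em s * n0 + h⁻¹ * (Em s * F s))
        = (∫ s in (0:ℝ)..x, Em s * n0) + ∫ s in (0:ℝ)..x, h⁻¹ * (Em s * F s) :=
      intervalIntegral.integral_add ((hEmc.mul continuous_const).intervalIntegrable _ _)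
        ((continuous_const.mul (hEmc.mul hFcont)).intervalIntegrable _ _)
    have hpart1 : ∫ s in (0:ℝ)..x, Em s * n0 ≤ n0 * h := by
      rw [intervalIntegral.integral_mul_const, hS2 x]
      have h5 := (hEmPos x).le
      nlinarith [mul_nonneg (mul_nonneg hh.le h5) hn00]
    have hpart2 : ∫ s in (0:ℝ)..x, h⁻¹ * (Em s * F s) ≤ ∫ s in (0:ℝ)..x, ‖w s‖ := by
      have hsub : ∫ s in (0:ℝ)..x, (‖w s‖ - h⁻¹ * (Em s * F s))
          = (∫ s in (0:ℝ)..x, ‖w s‖) - ∫ s in (0:ℝ)..x, h⁻¹ * (Em s * F s) :=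
        intervalIntegral.integral_sub (hwc.norm.intervalIntegrable _ _)
          ((continuous_const.mul (hEmc.mul hFcont)).intervalIntegrable _ _)
      have h6 := hS3 x
      rw [hsub] at h6
      have h7 : 0 ≤ Em x * F x := mul_nonneg (hEmPos x).le (hFnn x hx)
      linarith
    calc ∫ s in (0:ℝ)..x, ‖wb s‖ ≤ _ := hmono
      _ = _ := hsplit
      _ ≤ n0 * h + ∫ s in (0:ℝ)..x, ‖w s‖ := add_le_add hpart1 hpart2
  -- Volterra inequality for ‖w‖ and Gronwall
  have key_w1 : ∀ x ∈ Set.Icc (0:ℝ) T,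
      ‖w x‖ ≤ n0 * (1 + a) + a * ∫ s in (0:ℝ)..x, ‖w s‖ := by
    intro x hx
    have h1 : w x = w 0 + ∫ s in (0:ℝ)..x, Am (wb s) := by rw [hI1 x]; abel
    have h2 : ‖w x‖ ≤ n0 + ∫ s in (0:ℝ)..x, a * ‖wb s‖ := by
      rw [h1]
      refine (norm_add_le _ _).trans ?_
      have h3 : ‖w 0‖ = n0 := by rw [hw0]
      have h4 : ‖∫ s in (0:ℝ)..x, Am (wb s)‖ ≤ ∫ s in (0:ℝ)..x, a * ‖wb s‖ := by
        refine (intervalIntegral.norm_integral_le_integral_norm hx.1).trans ?_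
        refine intervalIntegral.integral_mono_on hx.1
          ((Am.continuous.comp hwbc).norm.intervalIntegrable _ _)
          ((continuous_const.mul hwbc.norm).intervalIntegrable _ _) ?_
        intro s _
        exact hAle _
      linarith
    have h5 : ∫ s in (0:ℝ)..x, a * ‖wb s‖ = a * ∫ s in (0:ℝ)..x, ‖wb s‖ :=
      intervalIntegral.integral_const_mul _ _
    have h6 := key_intwb x hx.1
    have h7 : a * ∫ s in (0:ℝ)..x, ‖wb s‖ ≤ a * (n0 * h + ∫ s in (0:ℝ)..x, ‖w s‖) :=
      mul_le_mul_of_nonneg_left h6 ha0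
    have h8 : a * (n0 * h) ≤ a * n0 := by
      nlinarith [mul_nonneg (mul_nonneg ha0 hn00) (by linarith : (0:ℝ) ≤ 1 - h)]
    have h9 : a * (n0 * h + ∫ s in (0:ℝ)..x, ‖w s‖)
        = a * (n0 * h) + a * ∫ s in (0:ℝ)..x, ‖w s‖ := by ring
    rw [h5] at h2
    nlinarith [h2, h7, h8, h9]
  have key_w2 : ∀ x ∈ Set.Icc (0:ℝ) T, ‖w x‖ ≤ R := by
    have hgr := int_gronwall (φ := fun s => ‖w s‖) (T := T) (c := n0 * (1 + a)) (K := a)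
      hwc.norm (fun s => norm_nonneg _) ha0 (by positivity) key_w1
    intro x hx
    refine (hgr x hx).trans ?_
    rw [hR_def]
    have h1 : Real.exp (a * x) ≤ Real.exp (a * T) :=
      Real.exp_le_exp.2 (mul_le_mul_of_nonneg_left hx.2 ha0)
    have h2 : 0 ≤ n0 * (1 + a) := by positivity
    nlinarith
  -- uniform bound for ‖wb‖
  have key_wb2 : ∀ x ∈ Set.Icc (0:ℝ) T, ‖wb x‖ ≤ W := by
    intro x hx
    have hFb : F x ≤ R * (h * Ep x - h) := by
      have h1 : F x = ∫ s in (0:ℝ)..x, Ep s * ‖w s‖ := rfl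
      rw [h1]
      calc ∫ s in (0:ℝ)..x, Ep s * ‖w s‖ ≤ ∫ s in (0:ℝ)..x, Ep s * R := by
            refine intervalIntegral.integral_mono_on hx.1 (hFic.intervalIntegrable _ _)
              ((hEpc.mul continuous_const).intervalIntegrable _ _) ?_
            intro s hs
            exact mul_le_mul_of_nonneg_left (key_w2 s ⟨hs.1, hs.2.trans hx.2⟩) (hEpPos s).le
        _ = (∫ s in (0:ℝ)..x, Ep s) * R := intervalIntegral.integral_mul_const _ _
        _ = R * (h * Ep x - h) := by rw [hS1 x]; ring
    have h2 : h⁻¹ * F x ≤ R * Ep x - R := by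
      have h3 : h⁻¹ * F x ≤ h⁻¹ * (R * (h * Ep x - h)) := mul_le_mul_of_nonneg_left hFb hhi0
      have h4 : h⁻¹ * (R * (h * Ep x - h)) = R * Ep x - R := by field_simp
      linarith
    have h5 : Em x * (n0 + h⁻¹ * F x) ≤ Em x * (n0 + (R * Ep x - R)) :=
      mul_le_mul_of_nonneg_left (by linarith) (hEmPos x).le
    have h6 : Em x * (n0 + (R * Ep x - R)) = Em x * n0 + R * (Em x * Ep x) - R * Em x := by ring
    have h7 := hEmEp x
    have h8 := hEmle1 x hx.1
    have h9 := (hEmPos x).le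
    have h10 := key_wb' x hx.1
    rw [hW_def]
    nlinarith
  -- the O(h) bound for ‖w − wb‖
  have key_diff : ∀ x ∈ Set.Icc (0:ℝ) T, ‖w x - wb x‖ ≤ a * W * h := by
    intro x hx
    have h1 : Ep x • (w x - wb x) = ∫ s in (0:ℝ)..x, Ep s • Am (wb s) := (hI3 x).symm
    have h2 : ‖∫ s in (0:ℝ)..x, Ep s • Am (wb s)‖ ≤ ∫ s in (0:ℝ)..x, Ep s * (a * W) := by
      refine (intervalIntegral.norm_integral_le_integral_norm hx.1).trans ?_
      refine intervalIntegral.integral_mono_on hx.1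
        ((hEpc.smul (Am.continuous.comp hwbc)).norm.intervalIntegrable _ _)
        ((hEpc.mul continuous_const).intervalIntegrable _ _) ?_
      intro s hs
      rw [norm_smul, Real.norm_eq_abs, abs_of_nonneg (hEpPos s).le]
      refine mul_le_mul_of_nonneg_left ?_ (hEpPos s).le
      exact (hAle _).trans (mul_le_mul_of_nonneg_left (key_wb2 s ⟨hs.1, hs.2.trans hx.2⟩) ha0)
    have h3 : ∫ s in (0:ℝ)..x, Ep s * (a * W) = a * W * (h * Ep x - h) := by
      rw [intervalIntegral.integral_mul_const, hS1 x]; ring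
    have h4 : Ep x * ‖w x - wb x‖ ≤ a * W * (h * Ep x - h) := by
      have h5 := congrArg norm h1
      rw [norm_smul, Real.norm_eq_abs, abs_of_nonneg (hEpPos x).le] at h5
      rw [h5]
      linarith [h2, h3.le, h3.ge]
    have h6 := hEmEp x
    have h7 := hEmle1 x hx.1
    have h8 := (hEmPos x).le
    have h9 : 0 ≤ a * W * h := mul_nonneg (mul_nonneg ha0 hW0) hh.le
    have h10 : Em x * (Ep x * ‖w x - wb x‖) ≤ Em x * (a * W * (h * Ep x - h)) :=
      mul_le_mul_of_nonneg_left h4 h8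
    nlinarith [h10, h6, h7, h8, h9, norm_nonneg (w x - wb x)]
  -- Gronwall for the error w − u
  have hwu0 : w 0 - u 0 = 0 := by rw [hw0, hu0, sub_self]
  have epsd : ∀ s : ℝ, HasDerivAt (fun r => w r - u r) (Am (wb s) - Am (u s)) s := fun s =>
    (hw' s).sub (hu' s)
  have epsbound : ∀ x ∈ Set.Ico (0:ℝ) T,
      ‖Am (wb x) - Am (u x)‖ ≤ a * ‖w x - u x‖ + a * (a * W * h) := by
    intro x hx
    have hsplit : Am (wb x) - Am (u x) = Am (w x - u x) + Am (wb x - w x) := by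
      rw [← map_sub, show wb x - u x = (w x - u x) + (wb x - w x) by abel, map_add]
    rw [hsplit]
    refine (norm_add_le _ _).trans ?_
    have b1 : ‖Am (w x - u x)‖ ≤ a * ‖w x - u x‖ := hAle _
    have b2 : ‖Am (wb x - w x)‖ ≤ a * (a * W * h) := by
      refine (hAle _).trans (mul_le_mul_of_nonneg_left ?_ ha0)
      rw [norm_sub_rev]
      exact key_diff x ⟨hx.1, hx.2.le⟩
    linarith
  have keyeps := norm_le_gronwallBound_of_norm_deriv_right_le
    (f := fun r => w r - u r) (f' := fun r => Am (wb r) - Am (u r))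
    (δ := 0) (K := a) (ε := a * (a * W * h)) (a := 0) (b := T)
    (fun x _ => ((epsd x).continuousAt).continuousWithinAt)
    (fun x _ => (epsd x).hasDerivWithinAt)
    (by show ‖w 0 - u 0‖ ≤ 0; rw [hwu0, norm_zero])
    epsbound
  have heT : ‖w T - u T‖ ≤ gronwallBound 0 a (a * (a * W * h)) (T - 0) :=
    keyeps T ⟨hT, le_refl T⟩
  have hgb : gronwallBound 0 a (a * (a * W * h)) (T - 0)
      ≤ a * W * (a * T) * Real.exp (a * T) * h := by
    rw [sub_zero]
    rcases eq_or_ne a 0 with h0 | h0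
    · rw [h0, gronwallBound_K0]
      simp
    · rw [gronwallBound_of_K_ne_0 h0]
      have e1 : a * (a * W * h) / a = a * W * h := by field_simp
      simp only [zero_mul, zero_add, e1]
      have e2 : Real.exp (a * T) - 1 ≤ a * T * Real.exp (a * T) := exp_sub_one_le_mul_exp
      have e3 : 0 ≤ a * W * h := mul_nonneg (mul_nonneg ha0 hW0) hh.le
      nlinarith [mul_le_mul_of_nonneg_left e2 e3]
  -- conclusion
  rw [eucNorm_eq A h u0 T]
  have hrw1 : prr d (vFun A h u0 T) = wb T := by rw [hwb_def]
  have hrw2 : uFun A u0 T = u T := by rw [hu_def]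
  rw [hrw1, hrw2]
  have htri : ‖wb T - u T‖ ≤ ‖wb T - w T‖ + ‖w T - u T‖ := by
    have : wb T - u T = (wb T - w T) + (w T - u T) := by abel
    rw [this]
    exact norm_add_le _ _
  have hd1 : ‖wb T - w T‖ ≤ a * W * h := by
    rw [norm_sub_rev]
    exact key_diff T ⟨hT, le_refl T⟩
  have hfinal : a * W * h + a * W * (a * T) * Real.exp (a * T) * h ≤ C * h := by
    rw [hC_def]
    nlinarith [hh.le]
  linarith [htri, hd1, heT, hgb, hfinal]
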